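/- Let A be a real n×p matrix admitting a (thin) singular value decomposition A = U D Vᵀ with UᵀU = I_p, V a p×p orthogonal matrix, and D a p×p diagonal matrix with nonnegative diagonal entries. Then the maximum of tr(Hᵀ A) over all real n×p matrices H with HᵀH = I_p is exactly tr(D), and it is attained at H = U Vᵀ; i.e. tr(D) = tr(√(AᵀA)) and for every semi-orthogonal H, tr(Hᵀ A) ≤ tr((U Vᵀ)ᵀ A) = tr(D). -/

import Mathlib

open Matrix

/-- The positive semidefinite square root of a positive semidefinite matrix, as defined in
Mathlib (December 2024); Mathlib has since removed it in favour of `CFC.sqrt`. -/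
noncomputable def Matrix.PosSemidef.sqrt {n 𝕜 : Type*} [Fintype n] [RCLike 𝕜] [PartialOrder 𝕜] [DecidableEq n]
    {A : Matrix n n 𝕜} (hA : A.PosSemidef) : Matrix n n 𝕜 :=
  hA.1.eigenvectorUnitary.1 * diagonal ((↑) ∘ (√·) ∘ hA.1.eigenvalues) *
  (star hA.1.eigenvectorUnitary : Matrix n n 𝕜)

open scoped MatrixOrder in
theorem Matrix.PosSemidef.eq_sqrt_of_sq_eq {p : ℕ} {A B : Matrix (Fin p) (Fin p) ℝ}
    (hB : B.PosSemidef) (hA : A.PosSemidef) (h : B ^ 2 = A) : B = hA.sqrt := by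
  have h1 : CFC.sqrt A = B := CFC.sqrt_unique (by rw [← sq]; exact h) hB.nonneg
  rw [← h1, CFC.sqrt_eq_cfc, cfc_nnreal_eq_real _ A, hA.1.cfc_eq]
  simp only [IsHermitian.cfc, Matrix.PosSemidef.sqrt, Unitary.conjStarAlgAut_apply]
  congr 3
  funext i
  simp [Function.comp_apply, max_eq_left (hA.eigenvalues_nonneg i)]

/-- Let `A = U D Vᵀ` be a thin SVD (`Uᵀ U = I_p`, `V` orthogonal `p×p`, `D` diagonal
with nonnegative entries). Then the maximum of `tr(Hᵀ A)` over semi-orthogonal `H`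
(`Hᵀ H = I_p`) equals `tr(D)`, attained at `H = U Vᵀ`; moreover
`tr(D) = tr(√(Aᵀ A))`, the sum of the singular values of `A`. -/
theorem trace_max_over_semiorthogonal {n p : ℕ}
    (A U : Matrix (Fin n) (Fin p) ℝ) (V D : Matrix (Fin p) (Fin p) ℝ)
    (d : Fin p → ℝ)
    (hSVD : A = U * D * Vᵀ)
    (hU : Uᵀ * U = 1)
    (hV₁ : Vᵀ * V = 1) (hV₂ : V * Vᵀ = 1)
    (hD : D = Matrix.diagonal d) (hd : ∀ i, 0 ≤ d i)
    (hS : (Aᵀ * A).PosSemidef) :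
    D.trace = hS.sqrt.trace ∧
      ((U * Vᵀ)ᵀ * A).trace = D.trace ∧
      ∀ H : Matrix (Fin n) (Fin p) ℝ, Hᵀ * H = 1 →
        (Hᵀ * A).trace ≤ ((U * Vᵀ)ᵀ * A).trace := by
  have hDt : Dᵀ = D := by rw [hD, Matrix.diagonal_transpose]
  -- (U Vᵀ)ᵀ A = V D Vᵀ
  have hattain : (U * Vᵀ)ᵀ * A = V * D * Vᵀ := by
    rw [hSVD]
    simp only [Matrix.transpose_mul, Matrix.transpose_transpose, Matrix.mul_assoc]
    rw [← Matrix.mul_assoc Uᵀ U, hU, Matrix.one_mul]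
  have htraceB : (V * D * Vᵀ).trace = D.trace := by
    rw [Matrix.trace_mul_comm, ← Matrix.mul_assoc, hV₁, Matrix.one_mul]
  -- V D Vᵀ is the psd square root of Aᵀ A
  have hBpsd : (V * D * Vᵀ).PosSemidef := by
    have hdiag : (Matrix.diagonal d).PosSemidef :=
      Matrix.posSemidef_diagonal_iff.mpr hd
    rw [hD]
    have := hdiag.mul_mul_conjTranspose_same V
    simpa using this
  have hsq : (V * D * Vᵀ) ^ 2 = Aᵀ * A := by
    have hAtA : Aᵀ * A = V * (D * (D * Vᵀ)) := by
      rw [hSVD]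
      simp only [Matrix.transpose_mul, Matrix.transpose_transpose, hDt, Matrix.mul_assoc]
      rw [← Matrix.mul_assoc Uᵀ U, hU, Matrix.one_mul]
    rw [hAtA, pow_two]
    simp only [Matrix.mul_assoc]
    rw [← Matrix.mul_assoc Vᵀ V, hV₁, Matrix.one_mul]
  have hsqrt : V * D * Vᵀ = hS.sqrt := hBpsd.eq_sqrt_of_sq_eq hS hsq
  refine ⟨by rw [← hsqrt, htraceB], by rw [hattain, htraceB], ?_⟩
  intro H hH
  rw [hattain, htraceB]
  -- tr(Hᵀ A) = ∑ i, (Vᵀ Hᵀ U) i i * d i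
  have key : (Hᵀ * A).trace = ∑ i, (Vᵀ * Hᵀ * U) i i * d i := by
    have e1 : Hᵀ * A = (Hᵀ * U * D) * Vᵀ := by
      rw [hSVD]; simp only [Matrix.mul_assoc]
    rw [e1, Matrix.trace_mul_comm]
    have e2 : Vᵀ * (Hᵀ * U * D) = (Vᵀ * Hᵀ * U) * Matrix.diagonal d := by
      rw [hD]; simp only [Matrix.mul_assoc]
    rw [e2]
    simp [Matrix.trace, Matrix.diag, Matrix.mul_diagonal]
  rw [key, hD, Matrix.trace_diagonal]
  apply Finset.sum_le_sum
  intro i _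
  have hbound : (Vᵀ * Hᵀ * U) i i ≤ 1 := by
    set W := H * V with hW
    have hWt : Vᵀ * Hᵀ * U = Wᵀ * U := by rw [hW, Matrix.transpose_mul]
    have hWW : Wᵀ * W = 1 := by
      rw [hW, Matrix.transpose_mul]
      calc Vᵀ * Hᵀ * (H * V) = Vᵀ * (Hᵀ * H * V) := by simp only [Matrix.mul_assoc]
        _ = 1 := by rw [hH, Matrix.one_mul, hV₁]
    have h1 : ∑ k, W k i ^ 2 = 1 := by
      have := congrFun (congrFun hWW i) i
      simpa [Matrix.mul_apply, sq, Matrix.one_apply] using this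
    have h2 : ∑ k, U k i ^ 2 = 1 := by
      have := congrFun (congrFun hU i) i
      simpa [Matrix.mul_apply, sq, Matrix.one_apply] using this
    have hNi : (Vᵀ * Hᵀ * U) i i = ∑ k, W k i * U k i := by
      rw [hWt]; simp [Matrix.mul_apply]
    have hcs := Finset.sum_mul_sq_le_sq_mul_sq Finset.univ
      (fun k => W k i) (fun k => U k i)
    rw [h1, h2, mul_one] at hcs
    rw [hNi]
    nlinarith [hcs]
  calc (Vᵀ * Hᵀ * U) i i * d i ≤ 1 * d i :=
        mul_le_mul_of_nonneg_right hbound (hd i)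
    _ = d i := one_mul _
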